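/- arXiv:2005.03728 — 6 statements merged into one kernel-verified Lean document; each statement's English description precedes it below -/
import Mathlib

section
/- For positive integers k ≤ n, a real α with 0 ≤ α ≤ 1, and nonnegative reals x_1,…,x_n, the sum over all k-element subsets {i_1<…<i_k} of {1,…,n} of (x_{i_1}+…+x_{i_k})^α is at least C(n-1,k-1)·(x_1+…+x_n)^α. -/
open Finset

lemma count_subsets (n k : ℕ) (i : Fin n) (hk : 0 < k) :
    #((Finset.powersetCard k (Finset.univ : Finset (Fin n))).filter (fun s => i ∈ s))
      = (n - 1).choose (k - 1) := by
  classical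
  have hcb : #((Finset.powersetCard k (Finset.univ : Finset (Fin n))).filter (fun s => i ∈ s))
      = #(Finset.powersetCard (k-1) ((Finset.univ : Finset (Fin n)).erase i)) := by
   refine Finset.card_bij (fun (s : Finset (Fin n)) _ => s.erase i) ?_ ?_ ?_
   · (
      intro s hs
      simp only [mem_filter, mem_powersetCard] at hs
      simp only [mem_powersetCard]
      refine ⟨fun a ha => ?_, ?_⟩
      · simp only [mem_erase] at ha ⊢
        exact ⟨ha.1, mem_univ _⟩
      · rw [Finset.card_erase_of_mem hs.2, hs.1.2])
   · (
      intro s hs t ht hst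
      simp only [mem_filter] at hs ht
      have h2 : insert i (s.erase i) = insert i (t.erase i) := congrArg (insert i) hst
      rwa [Finset.insert_erase hs.2, Finset.insert_erase ht.2] at h2)
   · (
      intro t ht
      simp only [mem_powersetCard, subset_erase] at ht
      refine ⟨insert i t, ?_, ?_⟩
      · simp only [mem_filter, mem_powersetCard]
        refine ⟨⟨fun a _ => mem_univ _, ?_⟩, mem_insert_self _ _⟩
        rw [Finset.card_insert_of_notMem ht.1.2, ht.2, Nat.sub_add_cancel hk]
      · exact Finset.erase_insert ht.1.2)
  rw [hcb, Finset.card_powersetCard, Finset.card_erase_of_mem (mem_univ _), card_univ,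
    Fintype.card_fin]

theorem stmt0 (n k : ℕ) (hk : 0 < k) (hkn : k ≤ n) (α : ℝ) (hα0 : 0 ≤ α) (hα1 : α ≤ 1)
    (x : Fin n → ℝ) (hx : ∀ i, 0 ≤ x i) :
    ((n - 1).choose (k - 1) : ℝ) * (∑ i, x i) ^ α ≤
      ∑ s ∈ Finset.powersetCard k (Finset.univ : Finset (Fin n)), (∑ i ∈ s, x i) ^ α := by
  classical
  set T : ℝ := ∑ i, x i with hT
  have hT0 : 0 ≤ T := Finset.sum_nonneg fun i _ => hx i
  have hdc : ∑ s ∈ Finset.powersetCard k (Finset.univ : Finset (Fin n)), (∑ i ∈ s, x i)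
      = ((n - 1).choose (k - 1) : ℝ) * T := by
    have h1 : ∀ s ∈ Finset.powersetCard k (Finset.univ : Finset (Fin n)),
        (∑ i ∈ s, x i) = ∑ i : Fin n, if i ∈ s then x i else 0 := by
      intro s _
      rw [Finset.sum_ite_mem, Finset.univ_inter]
    rw [Finset.sum_congr rfl h1, Finset.sum_comm]
    rw [hT, Finset.mul_sum, Finset.sum_congr rfl]
    intro i _
    rw [← Finset.sum_filter, Finset.sum_const, count_subsets n k i hk, nsmul_eq_mul]
  rcases eq_or_lt_of_le hT0 with hT0' | hTpos
  · have hx0 : ∀ i, x i = 0 := by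
      intro i
      exact (Finset.sum_eq_zero_iff_of_nonneg (fun i _ => hx i)).1 hT0'.symm i (mem_univ i)
    rcases eq_or_lt_of_le hα0 with hα0' | hαpos
    · simp only [← hα0', Real.rpow_zero, mul_one]
      rw [Finset.sum_const, Finset.card_powersetCard, card_univ, Fintype.card_fin,
        nsmul_eq_mul, mul_one]
      have hle : (n - 1).choose (k - 1) ≤ n.choose k := by
        have h2 : n.choose k = (n - 1).choose (k - 1) + (n - 1).choose k := by
          conv_lhs => rw [show n = (n - 1) + 1 from (Nat.succ_pred_eq_of_pos (hk.trans_le hkn)).symm,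
            show k = (k - 1) + 1 from (Nat.succ_pred_eq_of_pos hk).symm]
          rw [Nat.choose_succ_succ]
          have hks : (k - 1).succ = k := Nat.succ_pred_eq_of_pos hk
          rw [hks]
        omega
      exact_mod_cast hle
    · have hs0 : ∀ s ∈ Finset.powersetCard k (Finset.univ : Finset (Fin n)),
          (∑ i ∈ s, x i) ^ α = 0 := by
        intro s _
        rw [Finset.sum_eq_zero (fun i _ => hx0 i), Real.zero_rpow (ne_of_gt hαpos)]
      rw [Finset.sum_congr rfl hs0, Finset.sum_const, smul_zero, ← hT0',
        Real.zero_rpow (ne_of_gt hαpos), mul_zero]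
  · calc ((n - 1).choose (k - 1) : ℝ) * T ^ α
        = (∑ s ∈ Finset.powersetCard k (Finset.univ : Finset (Fin n)), (∑ i ∈ s, x i))
            * T ^ (α - 1) := by
          have hTα : T ^ α = T ^ (1:ℝ) * T ^ (α - 1) := by
            rw [← Real.rpow_add hTpos]
            congr 1
            ring
          rw [hdc, hTα, Real.rpow_one]
          ring
      _ = ∑ s ∈ Finset.powersetCard k (Finset.univ : Finset (Fin n)),
            (∑ i ∈ s, x i) * T ^ (α - 1) := by rw [Finset.sum_mul]
      _ ≤ ∑ s ∈ Finset.powersetCard k (Finset.univ : Finset (Fin n)), (∑ i ∈ s, x i) ^ α := by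
          apply Finset.sum_le_sum
          intro s hs
          have ht0 : 0 ≤ ∑ i ∈ s, x i := Finset.sum_nonneg fun i _ => hx i
          have htT : (∑ i ∈ s, x i) ≤ T :=
            Finset.sum_le_sum_of_subset_of_nonneg (Finset.subset_univ s) (fun i _ _ => hx i)
          rcases eq_or_lt_of_le ht0 with h0 | hpos
          · rw [← h0, zero_mul]
            positivity
          · have hle2 : T ^ (α - 1) ≤ (∑ i ∈ s, x i) ^ (α - 1) :=
              Real.rpow_le_rpow_of_nonpos hpos htT (by linarith)
            calc (∑ i ∈ s, x i) * T ^ (α - 1)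
                ≤ (∑ i ∈ s, x i) * (∑ i ∈ s, x i) ^ (α - 1) :=
                  mul_le_mul_of_nonneg_left hle2 ht0
              _ = (∑ i ∈ s, x i) ^ (1:ℝ) * (∑ i ∈ s, x i) ^ (α - 1) := by
                  rw [Real.rpow_one]
              _ = (∑ i ∈ s, x i) ^ ((1:ℝ) + (α - 1)) := (Real.rpow_add hpos 1 (α - 1)).symm
              _ = (∑ i ∈ s, x i) ^ α := by congr 1; ring
end

section
/- For positive integers k ≤ n, a real α ≥ 1, and nonnegative reals x_1,…,x_n, the sum over all k-element subsets {i_1<…<i_k} of {1,…,n} of (x_{i_1}+…+x_{i_k})^α is at most C(n-1,k-1)·(x_1+…+x_n)^α. -/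
open Finset

lemma count_lemma (n k : ℕ) (hk : 0 < k) (i : Fin n) :
    ((Finset.powersetCard k (Finset.univ : Finset (Fin n))).filter (fun s => i ∈ s)).card
      = (n-1).choose (k-1) := by
  have hc : (n-1).choose (k-1) = (Finset.powersetCard (k-1) (Finset.univ.erase i)).card := by
    simp [Finset.card_powersetCard, Finset.card_erase_of_mem]
  rw [hc]
  apply Finset.card_bij (fun s _ => s.erase i)
  · intro s hs
    simp only [mem_filter, mem_powersetCard] at hs
    simp only [mem_powersetCard]
    exact ⟨fun a ha => by
      simp only [mem_erase, mem_univ, and_true]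
      exact (Finset.mem_erase.1 ha).1,
      by rw [Finset.card_erase_of_mem hs.2, (hs.1).2]⟩
  · intro s hs t ht h
    simp only [mem_filter] at hs ht
    rw [← Finset.insert_erase hs.2, ← Finset.insert_erase ht.2, h]
  · intro t ht
    simp only [mem_powersetCard] at ht
    refine ⟨insert i t, ?_, ?_⟩
    · simp only [mem_filter, mem_powersetCard, mem_insert, true_or, and_true]
      have hi : i ∉ t := fun h => by simpa using ht.1 h
      refine ⟨fun a _ => mem_univ a, ?_⟩
      rw [Finset.card_insert_of_notMem hi, ht.2]
      omega
    · exact Finset.erase_insert (fun h => by simpa using ht.1 h)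

theorem stmt1 (n k : ℕ) (hk : 0 < k) (hkn : k ≤ n) (α : ℝ) (hα : 1 ≤ α)
    (x : Fin n → ℝ) (hx : ∀ i, 0 ≤ x i) :
    ∑ s ∈ Finset.powersetCard k (Finset.univ : Finset (Fin n)), (∑ i ∈ s, x i) ^ α ≤
      ((n - 1).choose (k - 1) : ℝ) * (∑ i, x i) ^ α := by
  set S := ∑ i, x i with hS
  have hS0 : 0 ≤ S := Finset.sum_nonneg fun i _ => hx i
  -- key pointwise bound: for each s, (∑ i ∈ s, x i)^α ≤ (∑ i ∈ s, x i) * S^(α-1)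
  have key : ∀ s ∈ Finset.powersetCard k (Finset.univ : Finset (Fin n)),
      (∑ i ∈ s, x i) ^ α ≤ (∑ i ∈ s, x i) * S ^ (α - 1) := by
    intro s _
    set a := ∑ i ∈ s, x i with ha
    have ha0 : 0 ≤ a := Finset.sum_nonneg fun i _ => hx i
    have haS : a ≤ S := Finset.sum_le_sum_of_subset_of_nonneg (Finset.subset_univ s)
      (fun i _ _ => hx i)
    calc a ^ α = a * a ^ (α - 1) := by
          rcases eq_or_lt_of_le ha0 with h | h
          · rw [← h, Real.zero_rpow (by linarith), zero_mul]
          · rw [← Real.rpow_one_add' (le_of_lt h) (by linarith)]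
            ring_nf
      _ ≤ a * S ^ (α - 1) := by
          apply mul_le_mul_of_nonneg_left _ ha0
          exact Real.rpow_le_rpow ha0 haS (by linarith)
  calc ∑ s ∈ Finset.powersetCard k (Finset.univ : Finset (Fin n)), (∑ i ∈ s, x i) ^ α
      ≤ ∑ s ∈ Finset.powersetCard k (Finset.univ : Finset (Fin n)),
          (∑ i ∈ s, x i) * S ^ (α - 1) := Finset.sum_le_sum key
    _ = (∑ s ∈ Finset.powersetCard k (Finset.univ : Finset (Fin n)), ∑ i ∈ s, x i)
          * S ^ (α - 1) := by rw [Finset.sum_mul]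
    _ = (((n-1).choose (k-1) : ℝ) * S) * S ^ (α - 1) := by
          congr 1
          have swap : ∑ s ∈ Finset.powersetCard k (Finset.univ : Finset (Fin n)), ∑ i ∈ s, x i
              = ∑ i : Fin n, (((Finset.powersetCard k (Finset.univ : Finset (Fin n))).filter
                  (fun s => i ∈ s)).card : ℝ) * x i := by
            calc ∑ s ∈ Finset.powersetCard k (Finset.univ : Finset (Fin n)), ∑ i ∈ s, x i
                = ∑ s ∈ Finset.powersetCard k (Finset.univ : Finset (Fin n)),
                    ∑ i : Fin n, if i ∈ s then x i else 0 := by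
                  refine Finset.sum_congr rfl fun s _ => ?_
                  rw [Finset.sum_ite_mem, Finset.univ_inter]
              _ = ∑ i : Fin n, ∑ s ∈ Finset.powersetCard k (Finset.univ : Finset (Fin n)),
                    if i ∈ s then x i else 0 := Finset.sum_comm
              _ = _ := by
                  refine Finset.sum_congr rfl fun i _ => ?_
                  rw [Finset.sum_ite, Finset.sum_const, Finset.sum_const_zero, add_zero,
                    nsmul_eq_mul]
          rw [swap]
          simp_rw [fun i => count_lemma n k hk i]
          rw [← Finset.mul_sum]
    _ = ((n-1).choose (k-1) : ℝ) * S ^ α := by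
          rcases eq_or_lt_of_le hS0 with h | h
          · rw [← h, Real.zero_rpow (by linarith : α ≠ 0)]
            ring
          · rw [mul_assoc, ← Real.rpow_one_add' (le_of_lt h) (by linarith)]
            ring_nf
end

section
/- Let (X,μ) be a probability space with a measurable involution x ↦ −x satisfying μ(−A) = μ(A) for all measurable A. Let (E,‖·‖) be a normed space, p ≥ 1, v ∈ E^n. Suppose f, φ ∈ L^p(X,μ) with μ(supp f ∩ supp φ) = 0 and φ(−x) = −φ(x) a.e., and with supp φ symmetric (i.e. −supp φ = supp φ up to null sets). Then I_p(v, f+φ) ≥ I_p(v, f), where I_p(v,g) = (∫_{X^n} ‖Σ_i g(x_i) v_i‖^p dμ^n)^{1/p}. -/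
open MeasureTheory

private lemma eval_mp' {X : Type*} [MeasurableSpace X] (μ : Measure X) [IsProbabilityMeasure μ]
    (n : ℕ) (i : Fin n) :
    MeasurePreserving (fun y : Fin n → X => y i) (Measure.pi fun _ => μ) μ := by
  refine ⟨measurable_pi_apply i, ?_⟩
  refine Measure.ext fun s hs => ?_
  rw [Measure.map_apply (measurable_pi_apply i) hs]
  have : (fun y : Fin n → X => y i) ⁻¹' s
      = Set.pi Set.univ (Function.update (fun _ => Set.univ) i s) := by
    ext y
    simp only [Set.mem_preimage, Set.mem_pi, Set.mem_univ, true_implies]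
    constructor
    · intro h j
      rcases eq_or_ne j i with rfl | hj
      · simpa using h
      · simp [Function.update_of_ne hj]
    · intro h; simpa using h i
  rw [this, Measure.pi_pi]
  rw [Finset.prod_eq_single i]
  · simp
  · intro j _ hj; simp [Function.update_of_ne hj]
  · simp

private lemma convex_half' (p : ℝ) (hp : 1 ≤ p) (a b : ℝ) (ha : 0 ≤ a) (hb : 0 ≤ b) :
    ((a + b) / 2) ^ p ≤ (a ^ p + b ^ p) / 2 := by
  have h := Real.rpow_arith_mean_le_arith_mean_rpow Finset.univ ![(1:ℝ)/2, 1/2] ![a, b]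
    (by intro i _; fin_cases i <;> norm_num) (by simp [Fin.sum_univ_two]; norm_num)
    (by intro i _; fin_cases i <;> simpa) hp
  simp [Fin.sum_univ_two] at h
  calc ((a + b) / 2) ^ p = (1/2 * a + 1/2 * b) ^ p := by ring_nf
    _ ≤ 1/2 * a ^ p + 1/2 * b ^ p := by convert h using 2 <;> ring
    _ = (a ^ p + b ^ p) / 2 := by ring

theorem stmt8 {X : Type*} [MeasurableSpace X] (μ : Measure X) [IsProbabilityMeasure μ]
    (neg : X → X) (hneg_inv : Function.Involutive neg) (hneg_mp : MeasurePreserving neg μ μ)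
    {E : Type*} [NormedAddCommGroup E] [NormedSpace ℝ E]
    (n : ℕ) (v : Fin n → E) (p : ℝ) (hp : 1 ≤ p)
    (f φ : X → ℝ) (hfm : Measurable f) (hφm : Measurable φ)
    (hf : MemLp f (ENNReal.ofReal p) μ) (hφ : MemLp φ (ENNReal.ofReal p) μ)
    (hsupp : μ (Function.support f ∩ Function.support φ) = 0)
    (hodd : ∀ᵐ x ∂μ, φ (neg x) = -φ x)
    (hsym : μ (symmDiff (neg ⁻¹' Function.support φ) (Function.support φ)) = 0) :
    (∫ x : Fin n → X, ‖∑ i, f (x i) • v i‖ ^ p ∂(Measure.pi fun _ => μ)) ^ (1 / p) ≤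
      (∫ x : Fin n → X, ‖∑ i, (f (x i) + φ (x i)) • v i‖ ^ p ∂(Measure.pi fun _ => μ)) ^ (1 / p) := by
  classical
  have hp0 : (0:ℝ) < p := lt_of_lt_of_le one_pos hp
  set ν : Measure (Fin n → X) := Measure.pi fun _ => μ with hν
  set A : Set X := Function.support φ with hA
  have hAm : MeasurableSet A := by
    rw [hA, Function.support_eq_preimage]
    exact hφm (measurableSet_singleton 0).compl
  set T : X → X := fun x => if x ∈ A then neg x else x with hTdef
  have hTm : Measurable T := Measurable.ite hAm hneg_mp.measurable measurable_id
  have hAeq : (neg ⁻¹' A : Set X) =ᵐ[μ] A := by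
    have := (measure_symmDiff_eq_zero_iff (μ := μ)
      (s := neg ⁻¹' Function.support φ) (t := Function.support φ)).mp hsym
    exact this
  -- T is measure preserving
  have hT : MeasurePreserving T μ μ := by
    refine ⟨hTm, Measure.ext fun s hs => ?_⟩
    rw [Measure.map_apply hTm hs]
    have hset : T ⁻¹' s = (A ∩ neg ⁻¹' s) ∪ (Aᶜ ∩ s) := by
      ext x; by_cases hx : x ∈ A <;> simp [hTdef, hx]
    rw [hset, measure_union
      (disjoint_compl_right.mono Set.inter_subset_left Set.inter_subset_left)
      (hAm.compl.inter hs)]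
    have h1 : (A ∩ neg ⁻¹' s : Set X) =ᵐ[μ] neg ⁻¹' (A ∩ s) := by
      rw [Set.preimage_inter]
      exact Filter.EventuallyEq.inter hAeq.symm (Filter.EventuallyEq.refl _ _)
    rw [measure_congr h1, hneg_mp.measure_preimage (hAm.inter hs).nullMeasurableSet]
    rw [Set.inter_comm A s, Set.inter_comm Aᶜ s, ← Set.diff_eq]
    exact measure_inter_add_diff s hAm
  -- disjoint supports a.e.
  have hfφ : ∀ᵐ x ∂μ, φ x ≠ 0 → f x = 0 := by
    rw [ae_iff]
    convert hsupp using 2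
    ext x
    simp [hA, Function.mem_support, and_comm]
  have hneg_ae : ∀ᵐ x ∂μ, φ (neg x) ≠ 0 → f (neg x) = 0 :=
    hneg_mp.quasiMeasurePreserving.tendsto_ae.eventually hfφ
  -- key a.e. identity: (f + φ) ∘ T = f - φ
  have hTae : ∀ᵐ x ∂μ, f (T x) + φ (T x) = f x - φ x := by
    filter_upwards [hodd, hfφ, hneg_ae] with x h1 h2 h3
    by_cases hx : x ∈ A
    · have hφx : φ x ≠ 0 := hx
      simp only [hTdef, if_pos hx]
      rw [h1, h3 (by rw [h1]; simpa using hφx), h2 hφx]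
      ring
    · have hφx : φ x = 0 := Function.notMem_support.mp hx
      simp only [hTdef, if_neg hx]
      rw [hφx]; ring
  -- MemLp / integrability machinery
  have hpne : ENNReal.ofReal p ≠ 0 := by
    simp only [ne_eq, ENNReal.ofReal_eq_zero, not_le]; linarith
  have htoReal : (ENNReal.ofReal p).toReal = p := ENNReal.toReal_ofReal (by linarith)
  have hmem : ∀ (g : X → ℝ), MemLp g (ENNReal.ofReal p) μ →
      Integrable (fun y : Fin n → X => ‖∑ i, g (y i) • v i‖ ^ p) ν := by
    intro g hgl
    have hsum : MemLp (fun y : Fin n → X => ∑ i, g (y i) • v i) (ENNReal.ofReal p) ν := by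
      refine memLp_finset_sum Finset.univ fun i _ => ?_
      have h1 : MemLp (fun x : X => g x • v i) (ENNReal.ofReal p) μ :=
        MemLp.smul (memLp_top_const (v i)) hgl
      exact h1.comp_measurePreserving (eval_mp' μ n i)
    have := hsum.integrable_norm_rpow hpne ENNReal.ofReal_ne_top
    rwa [htoReal] at this
  have hint_plus : Integrable (fun y : Fin n → X => ‖∑ i, (f (y i) + φ (y i)) • v i‖ ^ p) ν :=
    hmem (f + φ) (hf.add hφ)
  have hint_minus : Integrable (fun y : Fin n → X => ‖∑ i, (f (y i) - φ (y i)) • v i‖ ^ p) ν :=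
    hmem (f - φ) (hf.sub hφ)
  -- equality of the two integrals via the product transformation
  have hTpi : MeasurePreserving (fun y : Fin n → X => fun i => T (y i)) ν ν :=
    measurePreserving_pi _ _ (fun _ => hT)
  have key : ∫ y, ‖∑ i, (f (y i) - φ (y i)) • v i‖ ^ p ∂ν
      = ∫ y, ‖∑ i, (f (y i) + φ (y i)) • v i‖ ^ p ∂ν := by
    have h1 : ∫ y, ‖∑ i, (f (y i) + φ (y i)) • v i‖ ^ p ∂ν
        = ∫ y, ‖∑ i, (f (T (y i)) + φ (T (y i))) • v i‖ ^ p ∂ν := by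
      conv_lhs => rw [← hTpi.map_eq]
      exact integral_map hTpi.measurable.aemeasurable
        (hTpi.map_eq.symm ▸ hint_plus.aestronglyMeasurable)
    rw [h1]
    refine integral_congr_ae ?_
    have hall : ∀ᵐ y ∂ν, ∀ i, f (T (y i)) + φ (T (y i)) = f (y i) - φ (y i) := by
      refine ae_all_iff.2 fun i => ?_
      have h := (Measure.tendsto_eval_ae_ae (μ := fun _ : Fin n => μ) (i := i)).eventually hTae
      simpa [Function.eval] using h
    filter_upwards [hall] with y hy
    have : ∑ i, (f (T (y i)) + φ (T (y i))) • v i = ∑ i, (f (y i) - φ (y i)) • v i :=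
      Finset.sum_congr rfl fun i _ => by rw [hy i]
    rw [this]
  -- pointwise convexity bound
  have hineq : ∀ y : Fin n → X,
      ‖∑ i, f (y i) • v i‖ ^ p ≤
        (‖∑ i, (f (y i) + φ (y i)) • v i‖ ^ p + ‖∑ i, (f (y i) - φ (y i)) • v i‖ ^ p) / 2 := by
    intro y
    set S1 := ∑ i, (f (y i) + φ (y i)) • v i with hS1
    set S2 := ∑ i, (f (y i) - φ (y i)) • v i with hS2
    have hS : ∑ i, f (y i) • v i = (2⁻¹ : ℝ) • (S1 + S2) := by
      rw [hS1, hS2, ← Finset.sum_add_distrib, Finset.smul_sum]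
      refine Finset.sum_congr rfl fun i _ => ?_
      module
    have h1 : ‖∑ i, f (y i) • v i‖ ≤ (‖S1‖ + ‖S2‖) / 2 := by
      rw [hS, norm_smul]
      have : ‖(2⁻¹ : ℝ)‖ = 2⁻¹ := by norm_num
      rw [this]
      calc (2⁻¹ : ℝ) * ‖S1 + S2‖ ≤ 2⁻¹ * (‖S1‖ + ‖S2‖) := by
            gcongr; exact norm_add_le _ _
        _ = (‖S1‖ + ‖S2‖) / 2 := by ring
    calc ‖∑ i, f (y i) • v i‖ ^ p ≤ ((‖S1‖ + ‖S2‖) / 2) ^ p :=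
          Real.rpow_le_rpow (norm_nonneg _) h1 (le_of_lt hp0)
      _ ≤ (‖S1‖ ^ p + ‖S2‖ ^ p) / 2 :=
          convex_half' p hp _ _ (norm_nonneg _) (norm_nonneg _)
  -- integrate the inequality
  have hmono : ∫ y, ‖∑ i, f (y i) • v i‖ ^ p ∂ν
      ≤ ∫ y, ‖∑ i, (f (y i) + φ (y i)) • v i‖ ^ p ∂ν := by
    have h2 : ∫ y, ‖∑ i, f (y i) • v i‖ ^ p ∂ν
        ≤ ∫ y, (‖∑ i, (f (y i) + φ (y i)) • v i‖ ^ p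
            + ‖∑ i, (f (y i) - φ (y i)) • v i‖ ^ p) / 2 ∂ν := by
      refine integral_mono_of_nonneg
        (Filter.Eventually.of_forall fun y => Real.rpow_nonneg (norm_nonneg _) p)
        ((hint_plus.add hint_minus).div_const 2)
        (Filter.Eventually.of_forall hineq)
    calc ∫ y, ‖∑ i, f (y i) • v i‖ ^ p ∂ν
        ≤ ∫ y, (‖∑ i, (f (y i) + φ (y i)) • v i‖ ^ p
            + ‖∑ i, (f (y i) - φ (y i)) • v i‖ ^ p) / 2 ∂ν := h2
      _ = (∫ y, (‖∑ i, (f (y i) + φ (y i)) • v i‖ ^ p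
            + ‖∑ i, (f (y i) - φ (y i)) • v i‖ ^ p) ∂ν) / 2 := integral_div 2 _
      _ = ((∫ y, ‖∑ i, (f (y i) + φ (y i)) • v i‖ ^ p ∂ν)
            + ∫ y, ‖∑ i, (f (y i) - φ (y i)) • v i‖ ^ p ∂ν) / 2 := by
          rw [integral_add hint_plus hint_minus]
      _ = ∫ y, ‖∑ i, (f (y i) + φ (y i)) • v i‖ ^ p ∂ν := by
          rw [key]; ring
  exact Real.rpow_le_rpow
    (integral_nonneg fun y => Real.rpow_nonneg (norm_nonneg _) p) hmono (by positivity)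
end

section
/- Let (X,μ) be a probability space, (E,‖·‖) a normed space, n ≥ 1, p ≥ 1, and f ∈ L^p(X,μ). If f is non-constant almost everywhere (i.e. there exists c ∈ ℝ with μ(f > c) > 0 and μ(f < c) > 0), then v ↦ I_p(v,f) := (∫_{X^n} ‖Σ_{i=1}^n f(x_i) v_i‖^p dμ^n)^{1/p} defines a norm on E^n; in particular I_p(v,f) = 0 implies v = 0. -/
open MeasureTheory

theorem stmt12 {X : Type*} [MeasurableSpace X] (μ : Measure X) [IsProbabilityMeasure μ]
    {E : Type*} [NormedAddCommGroup E] [NormedSpace ℝ E]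
    (n : ℕ) (hn : 0 < n) (p : ℝ) (hp : 1 ≤ p)
    (f : X → ℝ) (hfm : Measurable f) (hf : MemLp f (ENNReal.ofReal p) μ)
    (hnonconst : ∃ c : ℝ, 0 < μ {x | c < f x} ∧ 0 < μ {x | f x < c}) :
    ∀ I : (Fin n → E) → ℝ,
      (∀ v : Fin n → E,
        I v = (∫ x : Fin n → X, ‖∑ i, f (x i) • v i‖ ^ p ∂(Measure.pi fun _ => μ)) ^ (1 / p)) →
      (∀ v : Fin n → E, ∀ c : ℝ, I (c • v) = |c| * I v) ∧
      (∀ v w : Fin n → E, I (v + w) ≤ I v + I w) ∧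
      (∀ v : Fin n → E, I v = 0 → v = 0) := by
  obtain ⟨m, rfl⟩ : ∃ m, n = m + 1 := ⟨n - 1, (Nat.succ_pred_eq_of_pos hn).symm⟩
  intro I hI
  set q : ENNReal := ENNReal.ofReal p with hq
  set π : Measure (Fin (m + 1) → X) := Measure.pi fun _ => μ with hπ
  have hp0 : 0 < p := lt_of_lt_of_le one_pos hp
  have hq0 : q ≠ 0 := by simp [hq, ENNReal.ofReal_eq_zero, not_le, hp0]
  have hqtop : q ≠ ⊤ := ENNReal.ofReal_ne_top
  have hqt : q.toReal = p := ENNReal.toReal_ofReal hp0.le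
  set g : (Fin (m + 1) → E) → (Fin (m + 1) → X) → E :=
    fun v x => ∑ i, f (x i) • v i with hg
  -- measure preserving eval
  have hmp : ∀ j : Fin (m + 1),
      MeasurePreserving (fun x : Fin (m + 1) → X => x j) π μ := by
    intro j
    have h1 := measurePreserving_piFinSuccAbove (fun _ : Fin (m + 1) => μ) j
    have h2 : MeasurePreserving (Prod.fst : X × (Fin m → X) → X)
        (μ.prod (Measure.pi fun _ : Fin m => μ)) μ :=
      ⟨measurable_fst, by simp⟩
    exact h2.comp h1
  have hmem : ∀ v : Fin (m + 1) → E, MemLp (g v) q π := by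
    intro v
    show MemLp (fun x : Fin (m + 1) → X => ∑ i, f (x i) • v i) q π
    refine memLp_finset_sum Finset.univ fun i _ => ?_
    have h1 : MemLp (fun x : Fin (m + 1) → X => f (x i)) q π :=
      hf.comp_measurePreserving (hmp i)
    have h2 : MemLp (fun _ : Fin (m + 1) → X => v i) ⊤ π := memLp_top_const _
    exact MemLp.smul (p := q) (q := ⊤) (r := q) h2 h1
  have hIv : ∀ v : Fin (m + 1) → E, I v = (eLpNorm (g v) q π).toReal := by
    intro v
    rw [(hmem v).eLpNorm_eq_integral_rpow_norm hq0 hqtop, hqt,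
      ENNReal.toReal_ofReal (by positivity), hI v, one_div]
  refine ⟨?_, ?_, ?_⟩
  · intro v c
    have hgc : g (c • v) = c • g v := by
      funext x
      simp only [hg, Pi.smul_apply, Finset.smul_sum]
      exact Finset.sum_congr rfl fun i _ => (smul_comm c (f (x i)) (v i)).symm
    rw [hIv, hIv, hgc, eLpNorm_const_smul, ENNReal.toReal_mul]
    simp [Real.norm_eq_abs]
  · intro v w
    have hgvw : g (v + w) = g v + g w := by
      funext x
      simp [hg, smul_add, Finset.sum_add_distrib]
    have h1 := eLpNorm_add_le (hmem v).1 (hmem w).1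
      (hq ▸ ENNReal.one_le_ofReal.mpr hp)
    rw [hIv, hIv, hIv, hgvw]
    calc (eLpNorm (g v + g w) q π).toReal
        ≤ (eLpNorm (g v) q π + eLpNorm (g w) q π).toReal :=
          ENNReal.toReal_mono (ENNReal.add_lt_top.2 ⟨(hmem v).2, (hmem w).2⟩).ne h1
      _ = _ := ENNReal.toReal_add (hmem v).2.ne (hmem w).2.ne
  · intro v hv0
    by_contra hv
    obtain ⟨j, hj⟩ : ∃ j, v j ≠ 0 := Function.ne_iff.1 hv
    -- g v = 0 a.e.
    have hae : g v =ᵐ[π] 0 := by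
      rw [hIv v, ENNReal.toReal_eq_zero_iff] at hv0
      rcases hv0 with h | h
      · exact (eLpNorm_eq_zero_iff (hmem v).1 hq0).1 h
      · exact absurd h (hmem v).2.ne
    set π' : Measure (Fin m → X) := Measure.pi fun _ : Fin m => μ with hπ'
    have h1 := measurePreserving_piFinSuccAbove (fun _ : Fin (m + 1) => μ) j
    set e := MeasurableEquiv.piFinSuccAbove (fun _ : Fin (m + 1) => X) j with he
    have h2 : ∀ᵐ y ∂(μ.prod π'), g v (e.symm y) = 0 := by
      have := hae.comp_tendsto
        (h1.symm e).quasiMeasurePreserving.tendsto_ae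
      exact this
    have h3 : ∀ᵐ y ∂(π'.prod μ), g v (e.symm y.swap) = 0 := by
      have hsw : MeasurePreserving Prod.swap (π'.prod μ) (μ.prod π') :=
        Measure.measurePreserving_swap
      exact hsw.quasiMeasurePreserving.tendsto_ae.eventually h2
    have h4 : ∀ᵐ z ∂π', ∀ᵐ a ∂μ, g v (e.symm (a, z)) = 0 := by
      have := Measure.ae_ae_of_ae_prod h3
      simpa [Prod.swap] using this
    obtain ⟨z, hz⟩ := h4.exists
    set w : E := ∑ i : Fin m, f (z i) • v (j.succAbove i) with hw
    have hz' : ∀ᵐ a ∂μ, f a • v j + w = 0 := by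
      filter_upwards [hz] with a ha
      set y : Fin (m + 1) → X := j.insertNth a z with hy
      have hes : e.symm (a, z) = y := rfl
      rw [hes] at ha
      have hsum := Fin.sum_univ_succAbove (fun i : Fin (m + 1) => f (y i) • v i) j
      simp only [hy, Fin.insertNth_apply_same, Fin.insertNth_apply_succAbove] at hsum
      have hgv : g v y = f a • v j + w := by rw [hg]; exact hsum
      rw [← hgv, ha]
    obtain ⟨c, hc1, hc2⟩ := hnonconst
    obtain ⟨a₁, ha₁, ha₁'⟩ := ((frequently_ae_mem_iff.2 hc1.ne').and_eventually hz').exists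
    obtain ⟨a₂, ha₂, ha₂'⟩ := ((frequently_ae_mem_iff.2 hc2.ne').and_eventually hz').exists
    have hne : f a₁ ≠ f a₂ := by
      have : f a₂ < f a₁ := lt_trans ha₂ ha₁
      exact this.ne'
    have : (f a₁ - f a₂) • v j = 0 := by
      rw [sub_smul, sub_eq_zero]
      have := ha₁'.trans ha₂'.symm
      exact add_right_cancel this
    rcases smul_eq_zero.1 this with h | h
    · exact hne (sub_eq_zero.1 h)
    · exact hj h
end

section
/- Let (X,μ) be a probability space, (E,‖·‖) a normed space, n ≥ 1, p ≥ 1, and v = (v_1,…,v_n) ∈ E^n with Σ_{i=1}^n v_i ≠ 0. Then f ↦ I_p(v,f) := (∫_{X^n} ‖Σ_{i=1}^n f(x_i) v_i‖^p dμ^n)^{1/p} defines a norm on L^p(X,μ); in particular I_p(v,f) = 0 implies f = 0 a.e. -/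
open MeasureTheory

private lemma mp_eval {X : Type*} [MeasurableSpace X] (μ : Measure X) [IsProbabilityMeasure μ]
    {k : ℕ} (i : Fin k) :
    MeasurePreserving (fun x : Fin k → X => x i) (Measure.pi fun _ => μ) μ := by
  refine ⟨measurable_pi_apply i, ?_⟩
  ext s hs
  rw [Measure.map_apply (measurable_pi_apply i) hs]
  have h1 : (fun x : Fin k → X => x i) ⁻¹' s
      = Set.pi Set.univ (Function.update (fun _ => Set.univ) i s) := by
    ext x
    simp only [Set.mem_preimage, Set.mem_pi, Set.mem_univ, true_implies]
    constructor
    · intro h j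
      rcases eq_or_ne j i with rfl | hj
      · simpa using h
      · simp [Function.update_of_ne hj]
    · intro h; simpa using h i
  rw [h1, Measure.pi_pi]
  rw [Finset.prod_eq_single i (fun j _ hj => by simp [Function.update_of_ne hj]) (by simp)]
  simp

theorem stmt13 {X : Type*} [MeasurableSpace X] (μ : Measure X) [IsProbabilityMeasure μ]
    {E : Type*} [NormedAddCommGroup E] [NormedSpace ℝ E]
    (n : ℕ) (hn : 0 < n) (p : ℝ) (hp : 1 ≤ p)
    (v : Fin n → E) (hv : ∑ i, v i ≠ 0) :
    ∀ I : (X → ℝ) → ℝ,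
      (∀ f : X → ℝ,
        I f = (∫ x : Fin n → X, ‖∑ i, f (x i) • v i‖ ^ p ∂(Measure.pi fun _ => μ)) ^ (1 / p)) →
      (∀ f : X → ℝ, ∀ c : ℝ, I (fun x => c * f x) = |c| * I f) ∧
      (∀ f g : X → ℝ, Measurable f → Measurable g →
        MemLp f (ENNReal.ofReal p) μ → MemLp g (ENNReal.ofReal p) μ →
        I (f + g) ≤ I f + I g) ∧
      (∀ f : X → ℝ, Measurable f → MemLp f (ENNReal.ofReal p) μ →
        I f = 0 → f =ᵐ[μ] 0) := by
  intro I hI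
  have hp0 : (0 : ℝ) < p := lt_of_lt_of_le one_pos hp
  have hpne : p ≠ 0 := hp0.ne'
  set q : ENNReal := ENNReal.ofReal p with hq
  have hq0 : q ≠ 0 := by simp [hq, ENNReal.ofReal_eq_zero, not_le, hp0]
  have hqtop : q ≠ ⊤ := ENNReal.ofReal_ne_top
  have hqtoReal : q.toReal = p := ENNReal.toReal_ofReal hp0.le
  have hq1 : (1 : ENNReal) ≤ q := ENNReal.one_le_ofReal.2 hp
  have hmem : ∀ f : X → ℝ, MemLp f q μ →
      MemLp (fun x : Fin n → X => ∑ i, f (x i) • v i) q (Measure.pi fun _ => μ) := by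
    intro f hf
    apply memLp_finset_sum
    intro i _
    have h1 : MemLp (fun x : Fin n → X => f (x i)) q (Measure.pi fun _ => μ) :=
      hf.comp_measurePreserving (mp_eval μ i)
    refine h1.of_le_mul (c := ‖v i‖)
      (h1.aestronglyMeasurable.smul aestronglyMeasurable_const) ?_
    refine Filter.Eventually.of_forall fun x => ?_
    rw [norm_smul, mul_comm]
  refine ⟨?_, ?_, ?_⟩
  · -- homogeneity
    intro f c
    rw [hI, hI]
    have h1 : ∀ x : Fin n → X,
        ‖∑ i, (c * f (x i)) • v i‖ ^ p = |c| ^ p * ‖∑ i, f (x i) • v i‖ ^ p := by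
      intro x
      have h2 : ∑ i, (c * f (x i)) • v i = c • ∑ i, f (x i) • v i := by
        rw [Finset.smul_sum]
        exact Finset.sum_congr rfl fun i _ => mul_smul c (f (x i)) (v i)
      rw [h2, norm_smul, Real.norm_eq_abs, Real.mul_rpow (abs_nonneg c) (norm_nonneg _)]
    simp_rw [h1]
    rw [integral_const_mul]
    rw [Real.mul_rpow (Real.rpow_nonneg (abs_nonneg c) p)
      (integral_nonneg fun x => Real.rpow_nonneg (norm_nonneg _) _)]
    congr 1
    rw [← Real.rpow_mul (abs_nonneg c), mul_one_div_cancel hpne, Real.rpow_one]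
  · -- triangle inequality
    intro f g hfm hgm hf hg
    have hGf := hmem f hf
    have hGg := hmem g hg
    have key : ∀ (h : X → ℝ),
        MemLp (fun x : Fin n → X => ∑ i, h (x i) • v i) q (Measure.pi fun _ => μ) →
        I h = (eLpNorm (fun x : Fin n → X => ∑ i, h (x i) • v i) q
          (Measure.pi fun _ => μ)).toReal := by
      intro h hh
      rw [hI, hh.eLpNorm_eq_integral_rpow_norm hq0 hqtop, hqtoReal,
        ENNReal.toReal_ofReal (Real.rpow_nonneg
          (integral_nonneg fun x => Real.rpow_nonneg (norm_nonneg _) _) _), one_div]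
    have hsum : (fun x : Fin n → X => ∑ i, (f + g) (x i) • v i)
        = (fun x : Fin n → X => ∑ i, f (x i) • v i)
          + (fun x : Fin n → X => ∑ i, g (x i) • v i) := by
      funext x
      simp [add_smul, Finset.sum_add_distrib]
    have hGfg : MemLp (fun x : Fin n → X => ∑ i, (f + g) (x i) • v i) q
        (Measure.pi fun _ => μ) := by
      rw [hsum]; exact hGf.add hGg
    rw [key f hGf, key g hGg, key (f + g) hGfg]
    calc (eLpNorm (fun x : Fin n → X => ∑ i, (f + g) (x i) • v i) q
          (Measure.pi fun _ => μ)).toReal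
        = (eLpNorm ((fun x : Fin n → X => ∑ i, f (x i) • v i)
            + fun x : Fin n → X => ∑ i, g (x i) • v i) q (Measure.pi fun _ => μ)).toReal := by
          rw [hsum]
      _ ≤ (eLpNorm (fun x : Fin n → X => ∑ i, f (x i) • v i) q (Measure.pi fun _ => μ)
            + eLpNorm (fun x : Fin n → X => ∑ i, g (x i) • v i) q
              (Measure.pi fun _ => μ)).toReal := by
          refine ENNReal.toReal_mono (ENNReal.add_ne_top.2
            ⟨hGf.eLpNorm_ne_top, hGg.eLpNorm_ne_top⟩) ?_
          exact eLpNorm_add_le hGf.1 hGg.1 hq1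
      _ = _ := ENNReal.toReal_add hGf.eLpNorm_ne_top hGg.eLpNorm_ne_top
  · -- definiteness
    intro f hfm hf hIf
    obtain ⟨N, rfl⟩ : ∃ N, n = N + 1 := ⟨n - 1, (Nat.succ_pred_eq_of_pos hn).symm⟩
    have hfint : Integrable f μ := memLp_one_iff_integrable.1 (hf.mono_exponent hq1)
    have hGf := hmem f hf
    set G : (Fin (N + 1) → X) → E := fun x => ∑ i, f (x i) • v i with hG
    have hA0 : ∫ x, ‖G x‖ ^ p ∂(Measure.pi fun _ : Fin (N + 1) => μ) = 0 := by
      have h2 : (∫ x, ‖G x‖ ^ p ∂(Measure.pi fun _ : Fin (N + 1) => μ)) ^ (1 / p) = 0 := by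
        rw [← hI f, hIf]
      exact (Real.rpow_eq_zero
        (integral_nonneg fun x => Real.rpow_nonneg (norm_nonneg _) _)
        (one_div_ne_zero hpne)).1 h2
    have hint : Integrable (fun x => ‖G x‖ ^ p) (Measure.pi fun _ : Fin (N + 1) => μ) := by
      have h3 := hGf.integrable_norm_rpow hq0 hqtop
      rwa [hqtoReal] at h3
    have hG0 : G =ᵐ[Measure.pi fun _ : Fin (N + 1) => μ] 0 := by
      have h3 := (integral_eq_zero_iff_of_nonneg
        (fun x => Real.rpow_nonneg (norm_nonneg _) _) hint).1 hA0
      filter_upwards [h3] with x hx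
      have h4 : ‖G x‖ ^ p = 0 := hx
      have h5 := (Real.rpow_eq_zero (norm_nonneg _) hpne).1 h4
      simpa using h5
    set m := ∫ x, f x ∂μ with hm
    have hterm : ∀ (k : ℕ) (j : Fin k) (a : ℝ),
        Integrable (fun x : Fin k → X => f (x j) * a) (Measure.pi fun _ => μ) := by
      intro k j a
      exact (memLp_one_iff_integrable.1
        ((memLp_one_iff_integrable.2 hfint).comp_measurePreserving (mp_eval μ j))).mul_const a
    have hev : ∀ (k : ℕ) (j : Fin k),
        ∫ x : Fin k → X, f (x j) ∂(Measure.pi fun _ => μ) = m := by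
      intro k j
      have h1 : ∫ x : Fin k → X, f (x j) ∂(Measure.pi fun _ => μ)
          = ∫ y, f y ∂(Measure.map (fun x : Fin k → X => x j) (Measure.pi fun _ => μ)) :=
        (integral_map (mp_eval μ j).measurable.aemeasurable
          ((mp_eval μ j).map_eq.symm ▸ hfm.aestronglyMeasurable)).symm
      rw [hm, h1, (mp_eval μ j).map_eq]
    obtain ⟨φ₁, hφ₁n, hφ₁⟩ := exists_dual_vector ℝ (∑ i, v i) (norm_ne_zero_iff.2 hv)
    have hm0 : m = 0 := by
      have h4 : (fun x : Fin (N + 1) → X => φ₁ (G x))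
          =ᵐ[Measure.pi fun _ : Fin (N + 1) => μ] (fun _ => (0 : ℝ)) := by
        filter_upwards [hG0] with x hx
        simp only [hx, Pi.zero_apply, map_zero]
      have h5 : ∫ x, φ₁ (G x) ∂(Measure.pi fun _ : Fin (N + 1) => μ) = 0 := by
        rw [integral_congr_ae h4, integral_zero]
      have h6 : ∫ x, φ₁ (G x) ∂(Measure.pi fun _ : Fin (N + 1) => μ)
          = m * φ₁ (∑ i, v i) := by
        have h7 : ∀ x : Fin (N + 1) → X, φ₁ (G x) = ∑ i, f (x i) * φ₁ (v i) := by
          intro x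
          simp [hG, map_sum, _root_.map_smul, smul_eq_mul]
        simp_rw [h7]
        rw [integral_finset_sum _ (fun i _ => hterm (N + 1) i _)]
        simp_rw [integral_mul_const, hev (N + 1)]
        rw [map_sum, Finset.mul_sum]
      rw [h6, hφ₁] at h5
      rcases mul_eq_zero.1 h5 with h | h
      · exact h
      · exact absurd h (by exact_mod_cast norm_ne_zero_iff.2 hv)
    have hex : ∃ i0, v i0 ≠ 0 := by
      by_contra h
      push_neg at h
      exact hv (Finset.sum_eq_zero fun i _ => h i)
    obtain ⟨i0, hvi0⟩ := hex
    obtain ⟨φ₂, hφ₂n, hφ₂⟩ := exists_dual_vector ℝ (v i0) (norm_ne_zero_iff.2 hvi0)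
    set e := MeasurableEquiv.piFinSuccAbove (fun _ : Fin (N + 1) => X) i0 with he
    have mp := measurePreserving_piFinSuccAbove (fun _ : Fin (N + 1) => μ) i0
    have mps : MeasurePreserving (⇑e.symm) ((μ).prod (Measure.pi fun _ : Fin N => μ))
        (Measure.pi fun _ : Fin (N + 1) => μ) := mp.symm e
    have hG0' : (fun z : X × (Fin N → X) => G (e.symm z))
        =ᵐ[(μ).prod (Measure.pi fun _ : Fin N => μ)] (fun _ => (0 : E)) := by
      filter_upwards [hG0.comp_tendsto mps.quasiMeasurePreserving.tendsto_ae] with z hz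
      exact hz
    have hae := Measure.ae_ae_of_ae_prod hG0'
    filter_upwards [hae] with x0 hx0
    have hexp : ∀ y : Fin N → X,
        G (e.symm (x0, y)) = f x0 • v i0 + ∑ j, f (y j) • v (i0.succAbove j) := by
      intro y
      have hsymm : (e.symm (x0, y) : Fin (N + 1) → X) = i0.insertNth x0 y := rfl
      show ∑ i, f (e.symm (x0, y) i) • v i = _
      rw [Fin.sum_univ_succAbove (fun i => f (e.symm (x0, y) i) • v i) i0]
      congr 1
      · rw [show e.symm (x0, y) i0 = x0 from by rw [hsymm]; exact Fin.insertNth_apply_same (α := fun _ => X) i0 x0 y]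
      · exact Finset.sum_congr rfl fun j _ => by
          rw [show e.symm (x0, y) (i0.succAbove j) = y j from by
            rw [hsymm]; exact Fin.insertNth_apply_succAbove (α := fun _ => X) i0 x0 y j]
    have hscal : ∀ᵐ y ∂(Measure.pi fun _ : Fin N => μ),
        f x0 * φ₂ (v i0) + ∑ j, f (y j) * φ₂ (v (i0.succAbove j)) = 0 := by
      filter_upwards [hx0] with y hy
      rw [hexp y] at hy
      have h8 := congrArg φ₂ hy
      simpa [map_add, map_sum, _root_.map_smul, smul_eq_mul] using h8
    have hintsum : Integrable (fun y : Fin N → X => ∑ j, f (y j) * φ₂ (v (i0.succAbove j)))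
        (Measure.pi fun _ => μ) := integrable_finset_sum _ fun j _ => hterm N j _
    have h7 : ∫ y, (f x0 * φ₂ (v i0) + ∑ j, f (y j) * φ₂ (v (i0.succAbove j)))
        ∂(Measure.pi fun _ : Fin N => μ) = 0 := by
      rw [integral_congr_ae hscal, integral_zero]
    rw [integral_add (integrable_const _) hintsum, integral_const,
      integral_finset_sum _ (fun j _ => hterm N j _)] at h7
    have h8 : ∀ j : Fin N,
        ∫ y : Fin N → X, f (y j) * φ₂ (v (i0.succAbove j)) ∂(Measure.pi fun _ => μ) = 0 := by
      intro j
      rw [integral_mul_const, hev N j, hm0, zero_mul]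
    simp only [h8, Finset.sum_const_zero, add_zero, measure_univ, ENNReal.toReal_one, probReal_univ,
      one_smul, smul_eq_mul, one_mul] at h7
    have h9 : φ₂ (v i0) ≠ 0 := by
      rw [hφ₂]
      exact_mod_cast norm_ne_zero_iff.2 hvi0
    have h10 : f x0 = 0 := by
      rcases mul_eq_zero.1 h7 with h | h
      · exact h
      · exact absurd h h9
    simpa using h10
end

section
/- Let K be the unit cube {x ∈ ℝ^n : ‖x‖_∞ ≤ 1} and L the cross-polytope {x ∈ ℝ^n : ‖x‖_1 ≤ 1}. Then the Banach–Mazur distance satisfies d(K,L) ≥ √(n/2). -/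
open Pointwise Finset
namespace BM2
variable {n : ℕ}



variable {n : ℕ}

def sg (b : Bool) : ℝ := if b then 1 else -1

lemma sg_mul_self (b : Bool) : sg b * sg b = 1 := by cases b <;> simp [sg]
lemma sg_not (b : Bool) : sg (!b) = - sg b := by cases b <;> simp [sg]
lemma abs_sg (b : Bool) : |sg b| = 1 := by cases b <;> simp [sg]

def flip (i : Fin n) (σ : Fin n → Bool) : Fin n → Bool := Function.update σ i (!(σ i))

lemma flip_apply_self (i : Fin n) (σ : Fin n → Bool) : flip i σ i = !(σ i) := by
  simp [flip]

lemma flip_apply_ne (i j : Fin n) (σ : Fin n → Bool) (h : j ≠ i) : flip i σ j = σ j := by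
  simp [flip, Function.update_of_ne h]

lemma flip_invol (i : Fin n) : Function.Involutive (flip i) := by
  intro σ; funext j
  by_cases h : j = i
  · subst h; simp [flip]
  · rw [flip_apply_ne _ _ _ h, flip_apply_ne _ _ _ h]

lemma sum_flip (i : Fin n) (F : (Fin n → Bool) → ℝ) :
    ∑ σ : Fin n → Bool, F (flip i σ) = ∑ σ : Fin n → Bool, F σ :=
  Fintype.sum_bijective (flip i) (flip_invol i).bijective _ _ (fun _ => rfl)

def negb (σ : Fin n → Bool) : Fin n → Bool := fun i => !(σ i)

lemma negb_invol : Function.Involutive (negb (n := n)) := by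
  intro σ; funext i; simp [negb]

lemma sum_negb (F : (Fin n → Bool) → ℝ) :
    ∑ σ : Fin n → Bool, F (negb σ) = ∑ σ : Fin n → Bool, F σ :=
  Fintype.sum_bijective negb negb_invol.bijective _ _ (fun _ => rfl)

def w (A : Finset (Fin n)) (σ : Fin n → Bool) : ℝ := ∏ i ∈ A, sg (σ i)

lemma complete (σ τ : Fin n → Bool) :
    ∑ A : Finset (Fin n), w A σ * w A τ = if σ = τ then (2:ℝ)^n else 0 := by
  have h1 : ∀ A : Finset (Fin n), w A σ * w A τ = ∏ i ∈ A, (sg (σ i) * sg (τ i)) := by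
    intro A; rw [w, w, ← Finset.prod_mul_distrib]
  have h2 : ∑ A : Finset (Fin n), w A σ * w A τ
      = ∏ i : Fin n, (sg (σ i) * sg (τ i) + 1) := by
    rw [Finset.prod_add]
    rw [Finset.powerset_univ]
    exact Finset.sum_congr rfl (fun A _ => by rw [h1, Finset.prod_const_one, mul_one])
  rw [h2]
  by_cases h : σ = τ
  · subst h
    simp only [sg_mul_self, if_pos rfl]
    rw [Finset.prod_const]
    norm_num
  · rw [if_neg h]
    obtain ⟨i, hi⟩ : ∃ i, σ i ≠ τ i := by
      by_contra hc
      push_neg at hc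
      exact h (funext hc)
    apply Finset.prod_eq_zero (Finset.mem_univ i)
    revert hi
    cases σ i <;> cases τ i <;> simp [sg]



noncomputable def coef (f : (Fin n → Bool) → ℝ) (A : Finset (Fin n)) : ℝ :=
  ∑ σ : Fin n → Bool, f σ * w A σ

lemma parseval (f g : (Fin n → Bool) → ℝ) :
    ∑ A : Finset (Fin n), coef f A * coef g A
      = 2^n * ∑ σ : Fin n → Bool, f σ * g σ := by
  have h1 : ∀ A : Finset (Fin n), coef f A * coef g A
      = ∑ σ : Fin n → Bool, ∑ τ : Fin n → Bool, (f σ * g τ) * (w A σ * w A τ) := by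
    intro A
    rw [coef, coef, Finset.sum_mul_sum]
    exact Finset.sum_congr rfl fun σ _ => Finset.sum_congr rfl fun τ _ => by ring
  calc ∑ A : Finset (Fin n), coef f A * coef g A
      = ∑ σ : Fin n → Bool, ∑ τ : Fin n → Bool, (f σ * g τ) *
          (∑ A : Finset (Fin n), w A σ * w A τ) := by
        simp_rw [h1]
        rw [Finset.sum_comm]
        exact Finset.sum_congr rfl fun σ _ => by
          rw [Finset.sum_comm]
          exact Finset.sum_congr rfl fun τ _ => by rw [Finset.mul_sum]
    _ = 2^n * ∑ σ : Fin n → Bool, f σ * g σ := by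
        simp_rw [complete, mul_ite, mul_zero]
        rw [Finset.mul_sum]
        exact Finset.sum_congr rfl fun σ _ => by
          rw [Finset.sum_ite_eq (Finset.univ) σ (fun τ => f σ * g τ * 2^n)]
          simp [mul_comm]

lemma coef_empty (f : (Fin n → Bool) → ℝ) : coef f ∅ = ∑ σ : Fin n → Bool, f σ := by
  simp [coef, w]

lemma w_flip (i : Fin n) (A : Finset (Fin n)) (σ : Fin n → Bool) :
    w A (flip i σ) = (if i ∈ A then -1 else 1) * w A σ := by
  by_cases h : i ∈ A
  · rw [if_pos h]
    rw [w, w, ← Finset.insert_erase h, Finset.prod_insert (Finset.notMem_erase i A),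
      Finset.prod_insert (Finset.notMem_erase i A)]
    rw [flip_apply_self, sg_not]
    have : ∀ j ∈ A.erase i, sg (flip i σ j) = sg (σ j) := fun j hj => by
      rw [flip_apply_ne _ _ _ (Finset.ne_of_mem_erase hj)]
    rw [Finset.prod_congr rfl this]
    ring
  · rw [if_neg h, one_mul, w, w]
    exact Finset.prod_congr rfl fun j hj => by
      rw [flip_apply_ne _ _ _ (by rintro rfl; exact h hj)]

lemma coef_comp_flip (i : Fin n) (f : (Fin n → Bool) → ℝ) (A : Finset (Fin n)) :
    coef (fun σ => f (flip i σ)) A = (if i ∈ A then -1 else 1) * coef f A := by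
  have h1 : coef (fun σ => f (flip i σ)) A
      = ∑ σ : Fin n → Bool, f σ * w A (flip i σ) := by
    rw [coef]
    have := sum_flip i (fun σ => f σ * w A (flip i σ))
    rw [← this]
    exact Finset.sum_congr rfl fun σ _ => by rw [flip_invol i σ]
  rw [h1, coef, Finset.mul_sum]
  exact Finset.sum_congr rfl fun σ _ => by rw [w_flip]; ring

lemma w_negb (A : Finset (Fin n)) (σ : Fin n → Bool) :
    w A (negb σ) = (-1)^A.card * w A σ := by
  rw [w, w]
  have : ∀ j ∈ A, sg (negb σ j) = -1 * sg (σ j) := fun j _ => by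
    rw [negb, sg_not]; ring
  rw [Finset.prod_congr rfl this, Finset.prod_mul_distrib, Finset.prod_const]

lemma coef_odd (f : (Fin n → Bool) → ℝ) (hf : ∀ σ, f (negb σ) = f σ)
    (A : Finset (Fin n)) (hA : ¬ Even A.card) : coef f A = 0 := by
  have h1 : coef f A = (-1)^A.card * coef f A := by
    conv_lhs => rw [coef, ← sum_negb (fun σ => f σ * w A σ)]
    rw [coef, Finset.mul_sum]
    exact Finset.sum_congr rfl fun σ _ => by rw [hf, w_negb]; ring
  have h2 : (-1:ℝ)^A.card = -1 := Odd.neg_one_pow (Nat.not_even_iff_odd.mp hA)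
  rw [h2] at h1
  linarith

lemma coef_D (i : Fin n) (f : (Fin n → Bool) → ℝ) (A : Finset (Fin n)) :
    coef (fun σ => f σ - f (flip i σ)) A = (if i ∈ A then 2 else 0) * coef f A := by
  have h1 : coef (fun σ => f σ - f (flip i σ)) A
      = coef f A - coef (fun σ => f (flip i σ)) A := by
    rw [coef, coef, coef, ← Finset.sum_sub_distrib]
    exact Finset.sum_congr rfl fun σ _ => by ring
  rw [h1, coef_comp_flip]
  by_cases h : i ∈ A <;> simp [h] <;> ring



lemma card_sigma : (Finset.univ : Finset (Fin n → Bool)).card = 2^n := by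
  simp [Finset.card_univ]

lemma even_poincare (f : (Fin n → Bool) → ℝ) (hf : ∀ σ, f (negb σ) = f σ) :
    8 * ((2:ℝ)^n * (∑ σ : Fin n → Bool, f σ ^ 2) - (∑ σ : Fin n → Bool, f σ)^2)
      ≤ 2^n * ∑ i : Fin n, ∑ σ : Fin n → Bool, (f σ - f (flip i σ))^2 := by
  have hpars : ∑ A : Finset (Fin n), coef f A ^ 2 = 2^n * ∑ σ : Fin n → Bool, f σ ^ 2 := by
    have := parseval f f
    simpa [sq] using this
  have hD : ∀ i : Fin n, 2^n * ∑ σ : Fin n → Bool, (f σ - f (flip i σ))^2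
      = ∑ A : Finset (Fin n), (if i ∈ A then (4:ℝ) else 0) * coef f A ^ 2 := by
    intro i
    have h := parseval (fun σ => f σ - f (flip i σ)) (fun σ => f σ - f (flip i σ))
    simp_rw [coef_D, sq] at h ⊢
    rw [← h]
    exact Finset.sum_congr rfl fun A _ => by by_cases hiA : i ∈ A <;> simp [hiA] <;> ring
  have hsum : 2^n * ∑ i : Fin n, ∑ σ : Fin n → Bool, (f σ - f (flip i σ))^2
      = ∑ A : Finset (Fin n), (4 * A.card : ℝ) * coef f A ^ 2 := by
    rw [Finset.mul_sum]
    simp_rw [hD]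
    rw [Finset.sum_comm]
    refine Finset.sum_congr rfl fun A _ => ?_
    rw [← Finset.sum_mul]
    congr 1
    rw [Finset.sum_ite_mem, Finset.univ_inter, Finset.sum_const]
    simp [mul_comm]
  rw [hsum]
  have hempty : (∑ σ : Fin n → Bool, f σ)^2 = coef f ∅ ^ 2 := by rw [coef_empty]
  rw [hempty, ← hpars]
  have hsplit : ∑ A : Finset (Fin n), coef f A ^ 2
      = coef f ∅ ^ 2 + ∑ A ∈ (Finset.univ : Finset (Finset (Fin n))).erase ∅, coef f A ^ 2 :=
    (Finset.add_sum_erase _ _ (Finset.mem_univ ∅)).symm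
  rw [hsplit]
  -- goal should now be: 8 * ∑_{A ≠ ∅} coef² ≤ ∑_A 4 card coef²  (possibly rearranged)
  have key : 8 * ∑ A ∈ (Finset.univ : Finset (Finset (Fin n))).erase ∅, coef f A ^ 2
      ≤ ∑ A : Finset (Fin n), (4 * A.card : ℝ) * coef f A ^ 2 := by
    rw [Finset.mul_sum]
    apply le_trans (Finset.sum_le_sum ?_) (Finset.sum_le_sum_of_subset_of_nonneg
      (Finset.subset_univ _) ?_)
    · intro A hA
      have hAne : A ≠ ∅ := Finset.ne_of_mem_erase hA
      by_cases hcard : Even A.card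
      · have h2 : 2 ≤ A.card := by
          rcases hcard with ⟨k, hk⟩
          have : A.card ≠ 0 := by simpa [Finset.card_eq_zero] using hAne
          omega
        have : (8:ℝ) ≤ 4 * A.card := by
          have : (2:ℝ) ≤ A.card := by exact_mod_cast h2
          linarith
        nlinarith [sq_nonneg (coef f A)]
      · rw [coef_odd f hf A hcard]
        simp
    · intro A _ _
      positivity
  linarith

def Ssum (a : Fin n → ℝ) (σ : Fin n → Bool) : ℝ := ∑ i, a i * sg (σ i)

lemma Ssum_flip (a : Fin n → ℝ) (i : Fin n) (σ : Fin n → Bool) :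
    Ssum a σ - Ssum a (flip i σ) = 2 * a i * sg (σ i) := by
  rw [Ssum, Ssum, ← Finset.sum_sub_distrib]
  rw [Finset.sum_eq_single i]
  · rw [flip_apply_self, sg_not]; ring
  · intro j _ hj
    rw [flip_apply_ne _ _ _ hj]; ring
  · intro h; exact absurd (Finset.mem_univ i) h

lemma Ssum_negb (a : Fin n → ℝ) (σ : Fin n → Bool) : Ssum a (negb σ) = - Ssum a σ := by
  rw [Ssum, Ssum, ← Finset.sum_neg_distrib]
  exact Finset.sum_congr rfl fun i _ => by rw [negb, sg_not]; ring

lemma sum_Ssum_sq (a : Fin n → ℝ) :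
    ∑ σ : Fin n → Bool, Ssum a σ ^ 2 = 2^n * ∑ i, a i ^ 2 := by
  have h1 : ∀ σ : Fin n → Bool, Ssum a σ ^ 2
      = ∑ i, ∑ j, (a i * a j) * (sg (σ i) * sg (σ j)) := by
    intro σ
    rw [sq, Ssum, Finset.sum_mul_sum]
    exact Finset.sum_congr rfl fun i _ => Finset.sum_congr rfl fun j _ => by ring
  simp_rw [h1]
  rw [Finset.sum_comm]
  have h2 : ∀ i : Fin n, ∑ σ : Fin n → Bool, ∑ j, (a i * a j) * (sg (σ i) * sg (σ j))
      = 2^n * a i ^ 2 := by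
    intro i
    rw [Finset.sum_comm]
    have h3 : ∀ j : Fin n, ∑ σ : Fin n → Bool, (a i * a j) * (sg (σ i) * sg (σ j))
        = if i = j then 2^n * a i ^2 else 0 := by
      intro j
      by_cases hij : i = j
      · subst hij
        rw [if_pos rfl]
        simp_rw [sg_mul_self, mul_one]
        rw [Finset.sum_const, card_sigma, nsmul_eq_mul]
        push_cast; ring
      · rw [if_neg hij]
        have hF := sum_flip i (fun σ => (a i * a j) * (sg (σ i) * sg (σ j)))
        have : ∀ σ : Fin n → Bool,
            (a i * a j) * (sg (flip i σ i) * sg (flip i σ j))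
            = -((a i * a j) * (sg (σ i) * sg (σ j))) := by
          intro σ
          rw [flip_apply_self, flip_apply_ne _ _ _ (fun h => hij h.symm), sg_not]
          ring
        rw [Finset.sum_congr rfl (fun σ _ => this σ), Finset.sum_neg_distrib] at hF
        linarith
    rw [Finset.sum_congr rfl (fun j _ => h3 j), Finset.sum_ite_eq (Finset.univ) i
      (fun _ => (2:ℝ)^n * a i ^2)]
    simp
  rw [Finset.sum_congr rfl (fun i _ => h2 i), ← Finset.mul_sum]

/-- Szarek's inequality, finite sum form. -/
lemma szarek (a : Fin n → ℝ) :
    (2:ℝ)^n * Real.sqrt ((∑ i, a i ^ 2) / 2) ≤ ∑ σ : Fin n → Bool, |Ssum a σ| := by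
  set f : (Fin n → Bool) → ℝ := fun σ => |Ssum a σ| with hfdef
  have hfeven : ∀ σ, f (negb σ) = f σ := fun σ => by
    rw [hfdef]; simp only; rw [Ssum_negb, abs_neg]
  have hP := even_poincare f hfeven
  have hgrad : ∑ i : Fin n, ∑ σ : Fin n → Bool, (f σ - f (flip i σ))^2
      ≤ 2^n * (4 * ∑ i, a i ^ 2) := by
    have h1 : ∀ i : Fin n, ∀ σ : Fin n → Bool, (f σ - f (flip i σ))^2 ≤ 4 * a i ^ 2 := by
      intro i σ
      have habs : |f σ - f (flip i σ)| ≤ |Ssum a σ - Ssum a (flip i σ)| :=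
        abs_abs_sub_abs_le_abs_sub _ _
      have h2 : (f σ - f (flip i σ))^2 ≤ (Ssum a σ - Ssum a (flip i σ))^2 := by
        rw [← sq_abs (f σ - f (flip i σ)), ← sq_abs (Ssum a σ - Ssum a (flip i σ))]
        exact pow_le_pow_left₀ (abs_nonneg _) habs 2
      rw [Ssum_flip] at h2
      calc (f σ - f (flip i σ))^2 ≤ (2 * a i * sg (σ i))^2 := h2
        _ = 4 * a i ^2 * (sg (σ i) * sg (σ i)) := by ring
        _ = 4 * a i ^2 := by rw [sg_mul_self, mul_one]
    calc ∑ i : Fin n, ∑ σ : Fin n → Bool, (f σ - f (flip i σ))^2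
        ≤ ∑ i : Fin n, ∑ _σ : Fin n → Bool, 4 * a i ^ 2 :=
          Finset.sum_le_sum fun i _ => Finset.sum_le_sum fun σ _ => h1 i σ
      _ = ∑ i : Fin n, (2:ℝ)^n * (4 * a i ^ 2) := by
          refine Finset.sum_congr rfl fun i _ => ?_
          rw [Finset.sum_const, card_sigma, nsmul_eq_mul]
          push_cast; ring
      _ = 2^n * (4 * ∑ i, a i ^ 2) := by
          rw [← Finset.mul_sum, ← Finset.mul_sum]
  have hf2 : ∑ σ : Fin n → Bool, f σ ^ 2 = 2^n * ∑ i, a i ^ 2 := by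
    simp_rw [hfdef, sq_abs]
    exact sum_Ssum_sq a
  -- combine: 8*(2^n * 2^n Σa² - L²) ≤ 2^n * 2^n * 4 Σa²  → L² ≥ (2^n)^2 Σa² / 2
  set L : ℝ := ∑ σ : Fin n → Bool, f σ with hL
  have hLnn : 0 ≤ L := Finset.sum_nonneg fun σ _ => abs_nonneg _
  have hsq : ((2:ℝ)^n)^2 * ((∑ i, a i ^ 2)/2) ≤ L^2 := by
    rw [hf2] at hP
    nlinarith [hP, hgrad, pow_pos (by norm_num : (0:ℝ) < 2) n]
  have := Real.sqrt_le_sqrt hsq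
  rw [Real.sqrt_sq hLnn] at this
  refine le_trans (le_of_eq ?_) this
  rw [Real.sqrt_mul (by positivity) ((∑ i, a i ^ 2)/2), Real.sqrt_sq (by positivity)]


end BM2

open Pointwise BM2

/-- The multiplicative Banach–Mazur distance between two subsets of `ℝ^n`. -/
noncomputable def bmDist (n : ℕ) (K L : Set (Fin n → ℝ)) : ℝ :=
  sInf {r : ℝ | 1 ≤ r ∧ ∃ T : (Fin n → ℝ) ≃ₗ[ℝ] (Fin n → ℝ), L ⊆ T '' K ∧ T '' K ⊆ r • L}

theorem stmt18 (n : ℕ) (hn : 0 < n) :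
    Real.sqrt ((n : ℝ) / 2) ≤
      bmDist n {x : Fin n → ℝ | ∀ i, |x i| ≤ 1} {x : Fin n → ℝ | ∑ i, |x i| ≤ 1} := by
  have hnR : (0:ℝ) < n := by exact_mod_cast hn
  apply le_csInf
  · -- the defining set is nonempty: take r = n and T = id
    refine ⟨(n:ℝ), by exact_mod_cast hn, LinearEquiv.refl ℝ _, ?_, ?_⟩
    · rw [show ⇑(LinearEquiv.refl ℝ (Fin n → ℝ)) = id from rfl, Set.image_id]
      intro x hx
      intro i
      calc |x i| ≤ ∑ j, |x j| :=
            Finset.single_le_sum (fun j _ => abs_nonneg (x j)) (Finset.mem_univ i)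
        _ ≤ 1 := hx
    · rw [show ⇑(LinearEquiv.refl ℝ (Fin n → ℝ)) = id from rfl, Set.image_id]
      intro x hx
      refine Set.mem_smul_set.mpr ⟨(n:ℝ)⁻¹ • x, ?_, ?_⟩
      · show ∑ i, |((n:ℝ)⁻¹ • x) i| ≤ 1
        have : ∀ i, |((n:ℝ)⁻¹ • x) i| = (n:ℝ)⁻¹ * |x i| := by
          intro i
          rw [Pi.smul_apply, smul_eq_mul, abs_mul, abs_of_nonneg (by positivity)]
        rw [Finset.sum_congr rfl fun i _ => this i, ← Finset.mul_sum]
        have hsum : ∑ i, |x i| ≤ (n:ℝ) := by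
          calc ∑ i, |x i| ≤ ∑ _i : Fin n, (1:ℝ) := Finset.sum_le_sum fun i _ => hx i
            _ = n := by simp
        calc (n:ℝ)⁻¹ * ∑ i, |x i| ≤ (n:ℝ)⁻¹ * n := by
              exact mul_le_mul_of_nonneg_left hsum (by positivity)
          _ = 1 := inv_mul_cancel₀ (ne_of_gt hnR)
      · exact smul_inv_smul₀ (ne_of_gt hnR) x
  · rintro r ⟨hr1, T, hLT, hTK⟩
    have hr0 : (0:ℝ) < r := lt_of_lt_of_le one_pos hr1
    set e : Fin n → (Fin n → ℝ) := fun j k => if j = k then 1 else 0 with he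
    set A : Fin n → Fin n → ℝ := fun k j => T (e j) k with hA
    have hTapply : ∀ (x : Fin n → ℝ) (k : Fin n), T x k = ∑ j, x j * A k j := by
      intro x k
      have h := LinearMap.pi_apply_eq_sum_univ
        (T.toLinearMap : (Fin n → ℝ) →ₗ[ℝ] (Fin n → ℝ)) x
      have h2 : T x = ∑ j, x j • T (e j) := h
      rw [h2, Finset.sum_apply]
      exact Finset.sum_congr rfl fun j _ => by rw [Pi.smul_apply, smul_eq_mul, hA]
    -- the inverse matrix entries are bounded by 1
    have hB : ∀ k : Fin n, ∃ x : Fin n → ℝ, (∀ j, |x j| ≤ 1) ∧ T x = e k := by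
      intro k
      have hek : e k ∈ {x : Fin n → ℝ | ∑ i, |x i| ≤ 1} := by
        show ∑ i, |e k i| ≤ 1
        have : ∀ i, |e k i| = if k = i then (1:ℝ) else 0 := by
          intro i; rw [he]; by_cases h : k = i <;> simp [h]
        rw [Finset.sum_congr rfl fun i _ => this i, Finset.sum_ite_eq]
        simp
      obtain ⟨x, hxK, hTx⟩ := hLT hek
      exact ⟨x, hxK, hTx⟩
    -- trace + Cauchy-Schwarz: rows of A have large total ℓ² norm
    have hrow : ∀ k : Fin n, (1:ℝ) ≤ Real.sqrt n * Real.sqrt (∑ j, A k j ^ 2) := by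
      intro k
      obtain ⟨x, hx1, hTx⟩ := hB k
      have htr : (1:ℝ) = ∑ j, x j * A k j := by
        have := hTapply x k
        rw [hTx] at this
        have hekk : e k k = 1 := by rw [he]; simp
        rw [hekk] at this; exact this
      have hcs : (∑ j, x j * A k j) ^ 2 ≤ (∑ j, x j ^ 2) * ∑ j, A k j ^ 2 :=
        Finset.sum_mul_sq_le_sq_mul_sq _ _ _
      have hx2 : ∑ j, x j ^ 2 ≤ (n:ℝ) := by
        calc ∑ j, x j ^ 2 ≤ ∑ _j : Fin n, (1:ℝ) := by
              refine Finset.sum_le_sum fun j _ => ?_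
              have := hx1 j
              nlinarith [abs_nonneg (x j), sq_abs (x j)]
          _ = n := by simp
      have h1 : (1:ℝ) ≤ (n:ℝ) * ∑ j, A k j ^ 2 := by
        have hAnn : (0:ℝ) ≤ ∑ j, A k j ^ 2 := Finset.sum_nonneg fun j _ => sq_nonneg _
        nlinarith
      calc (1:ℝ) = Real.sqrt 1 := (Real.sqrt_one).symm
        _ ≤ Real.sqrt ((n:ℝ) * ∑ j, A k j ^ 2) := Real.sqrt_le_sqrt h1
        _ = Real.sqrt n * Real.sqrt (∑ j, A k j ^ 2) := Real.sqrt_mul hnR.le _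
    -- each sign vector is mapped into r • L
    have hsigma : ∀ σ : Fin n → Bool, ∑ k, |T (fun j => sg (σ j)) k| ≤ r := by
      intro σ
      have hK : (fun j => sg (σ j)) ∈ {x : Fin n → ℝ | ∀ i, |x i| ≤ 1} := by
        intro i; rw [abs_sg]
      have hmem : T (fun j => sg (σ j)) ∈ r • {x : Fin n → ℝ | ∑ i, |x i| ≤ 1} :=
        hTK ⟨_, hK, rfl⟩
      obtain ⟨y, hy, hry⟩ := Set.mem_smul_set.mp hmem
      rw [← hry]
      have : ∀ k, |(r • y) k| = r * |y k| := by
        intro k; rw [Pi.smul_apply, smul_eq_mul, abs_mul, abs_of_pos hr0]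
      rw [Finset.sum_congr rfl fun k _ => this k, ← Finset.mul_sum]
      calc r * ∑ k, |y k| ≤ r * 1 := mul_le_mul_of_nonneg_left hy hr0.le
        _ = r := mul_one r
    -- identify T applied to sign vectors with Rademacher sums of the rows
    have hSsum : ∀ (k : Fin n) (σ : Fin n → Bool), Ssum (A k) σ = T (fun j => sg (σ j)) k := by
      intro k σ
      rw [Ssum, hTapply]
      exact Finset.sum_congr rfl fun j _ => by ring
    -- sum Szarek over the rows
    have hmain : (2:ℝ)^n * ∑ k, Real.sqrt ((∑ j, A k j ^ 2) / 2) ≤ (2:ℝ)^n * r := by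
      calc (2:ℝ)^n * ∑ k, Real.sqrt ((∑ j, A k j ^ 2) / 2)
          = ∑ k, (2:ℝ)^n * Real.sqrt ((∑ j, A k j ^ 2) / 2) := Finset.mul_sum _ _ _
        _ ≤ ∑ k, ∑ σ : Fin n → Bool, |Ssum (A k) σ| :=
            Finset.sum_le_sum fun k _ => szarek (A k)
        _ = ∑ σ : Fin n → Bool, ∑ k, |T (fun j => sg (σ j)) k| := by
            rw [Finset.sum_comm]
            exact Finset.sum_congr rfl fun σ _ => Finset.sum_congr rfl fun k _ => by
              rw [hSsum]
        _ ≤ ∑ _σ : Fin n → Bool, r := Finset.sum_le_sum fun σ _ => hsigma σ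
        _ = (2:ℝ)^n * r := by
            rw [Finset.sum_const, BM2.card_sigma, nsmul_eq_mul]
            push_cast; ring
    have h2n : (0:ℝ) < 2^n := by positivity
    have hrsum : ∑ k, Real.sqrt ((∑ j, A k j ^ 2) / 2) ≤ r :=
      le_of_mul_le_mul_left hmain h2n
    -- lower bound the row sum
    have hlow : Real.sqrt ((n:ℝ)/2) ≤ ∑ k, Real.sqrt ((∑ j, A k j ^ 2) / 2) := by
      have hsqrt2 : (0:ℝ) < Real.sqrt 2 := Real.sqrt_pos.mpr (by norm_num)
      have hsn : (0:ℝ) < Real.sqrt n := Real.sqrt_pos.mpr hnR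
      have hsum : Real.sqrt n ≤ ∑ k, Real.sqrt (∑ j, A k j ^ 2) := by
        have h1 : (n:ℝ) ≤ Real.sqrt n * ∑ k, Real.sqrt (∑ j, A k j ^ 2) := by
          calc (n:ℝ) = ∑ _k : Fin n, (1:ℝ) := by simp
            _ ≤ ∑ k, Real.sqrt n * Real.sqrt (∑ j, A k j ^ 2) :=
                Finset.sum_le_sum fun k _ => hrow k
            _ = Real.sqrt n * ∑ k, Real.sqrt (∑ j, A k j ^ 2) := (Finset.mul_sum _ _ _).symm
        have h2 : Real.sqrt n * Real.sqrt n ≤ Real.sqrt n * ∑ k, Real.sqrt (∑ j, A k j ^ 2) := by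
          rw [Real.mul_self_sqrt hnR.le]; exact h1
        exact le_of_mul_le_mul_left h2 hsn
      have heq : ∀ k, Real.sqrt ((∑ j, A k j ^ 2) / 2)
          = Real.sqrt (∑ j, A k j ^ 2) / Real.sqrt 2 :=
        fun k => Real.sqrt_div (Finset.sum_nonneg fun j _ => sq_nonneg _) 2
      rw [Finset.sum_congr rfl fun k _ => heq k, ← Finset.sum_div,
        Real.sqrt_div hnR.le 2]
      gcongr
    exact le_trans hlow hrsum
end
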